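/- arXiv:2509.11888 — 7 statements merged into one kernel-verified Lean document; each statement's English description precedes it below -/
import Mathlib

section
/- Let B be a ∗-algebra and M a B-bimodule. The assignments † ↦ ⋆_{M,†}, where ⋆_{M,†}(m) = (†(m))‾, and ⋆_M ↦ †_{⋆_M}, where †_{⋆_M}(m) = bb_M⁻¹( ⋆_M‾ (m̄) ), are mutually inverse bijections between †-structures on M and star-object structures on M in the bar category of B-bimodules. -/
open MulOpposite

noncomputable section

/-! ## STATEMENT 2: †-structures versus star object structures in the bar category -/

/-- The conjugate of a `B`-bimodule `M` (same carrier, conjugated actions). -/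
def Conj (M : Type) : Type := M

/-- The canonical map `m ↦ m̄`. -/
def Conj.mk {M : Type} (m : M) : Conj M := m

/-- The inverse of `Conj.mk`. -/
def Conj.unmk {M : Type} (m : Conj M) : M := m

instance {M : Type} [AddCommGroup M] : AddCommGroup (Conj M) :=
  inferInstanceAs (AddCommGroup M)

/-- `c • m̄ = (conj c • m)‾`. -/
instance {M : Type} [AddCommGroup M] [Module ℂ M] : Module ℂ (Conj M) :=
  Module.compHom M (starRingEnd ℂ)

/-- `b • m̄ = (m • b∗)‾`. -/
instance {B M : Type} [Ring B] [StarRing B] [AddCommGroup M] [Module Bᵐᵒᵖ M] :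
    Module B (Conj M) :=
  Module.compHom M ((starRingEquiv : B ≃+* Bᵐᵒᵖ) : B →+* Bᵐᵒᵖ)

/-- `m̄ • b = (b∗ • m)‾`. -/
instance {B M : Type} [Ring B] [StarRing B] [AddCommGroup M] [Module B M] :
    Module Bᵐᵒᵖ (Conj M) :=
  Module.compHom M (((starRingEquiv : B ≃+* Bᵐᵒᵖ).symm : Bᵐᵒᵖ ≃+* B) : Bᵐᵒᵖ →+* B)

/-- The conjugate `f̄(m̄) = (f m)‾` of a map. -/
def conjMap {M N : Type} (f : M → N) : Conj M → Conj N := f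

/-- The natural map `bb_M : M → M̿`, `m ↦ m̿`. -/
def conjBB {M : Type} (m : M) : Conj (Conj M) := Conj.mk (Conj.mk m)

/-- A `†`-structure on a `B`-bimodule `M`: an antilinear involution with
`†(bmc) = c∗ †(m) b∗`. -/
structure DaggerStructure (B M : Type) [Ring B] [Algebra ℂ B] [StarRing B]
    [AddCommGroup M] [Module ℂ M] [Module B M] [Module Bᵐᵒᵖ M] : Type where
  dag : M → M
  dag_add : ∀ x y, dag (x + y) = dag x + dag y
  dag_smul : ∀ (c : ℂ) (x : M), dag (c • x) = (starRingEnd ℂ c) • dag x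
  dag_invol : ∀ x, dag (dag x) = x
  dag_left : ∀ (b : B) (x : M), dag (b • x) = op (star b) • dag x
  dag_right : ∀ (b : B) (x : M), dag (op b • x) = star b • dag x

/-- A star object structure on a `B`-bimodule `M` in the bar category of `B`-bimodules:
a `B`-bimodule morphism `⋆_M : M → M̄` with `⋆̄_M ∘ ⋆_M = bb_M`. -/
structure StarObjStructure (B M : Type) [Ring B] [Algebra ℂ B] [StarRing B]
    [AddCommGroup M] [Module ℂ M] [Module B M] [Module Bᵐᵒᵖ M] : Type where
  so : M → Conj M
  so_add : ∀ x y, so (x + y) = so x + so y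
  so_smul : ∀ (c : ℂ) (x : M), so (c • x) = c • so x
  so_left : ∀ (b : B) (x : M), so (b • x) = b • so x
  so_right : ∀ (b : Bᵐᵒᵖ) (x : M), so (b • x) = b • so x
  so_bb : ∀ x, conjMap so (so x) = conjBB x

/-- The assignments `† ↦ ⋆_{M,†}` (with `⋆_{M,†}(m) = (†m)‾`) and
`⋆_M ↦ †_{⋆_M}` (with `†_{⋆_M}(m) = bb_M⁻¹(⋆̄_M(m̄))`) are mutually inverse bijections
between `†`-structures and star object structures on `M`. -/
theorem statement2 (B M : Type) [Ring B] [Algebra ℂ B] [StarRing B]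
    [AddCommGroup M] [Module ℂ M] [Module B M] [Module Bᵐᵒᵖ M] :
    ∃ (F : DaggerStructure B M → StarObjStructure B M)
      (G : StarObjStructure B M → DaggerStructure B M),
      (∀ D : DaggerStructure B M, (F D).so = fun m => Conj.mk (D.dag m)) ∧
      (∀ S : StarObjStructure B M,
        (G S).dag = fun m => Conj.unmk (Conj.unmk (conjMap S.so (Conj.mk m)))) ∧
      Function.LeftInverse G F ∧ Function.RightInverse G F := by

  refine ⟨fun D => ⟨fun m => Conj.mk (D.dag m), ?_, ?_, ?_, ?_, ?_⟩,
    fun S => ⟨fun m => Conj.unmk (Conj.unmk (conjMap S.so (Conj.mk m))), ?_, ?_, ?_, ?_, ?_⟩,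
    fun D => rfl, fun S => rfl, ?_, ?_⟩
  · intro x y; exact congrArg Conj.mk (D.dag_add x y)
  · intro c x; exact congrArg Conj.mk (D.dag_smul c x)
  · intro b x; exact congrArg Conj.mk (D.dag_left b x)
  · intro b x
    show Conj.mk (D.dag (op b.unop • x)) = _
    exact congrArg Conj.mk (D.dag_right b.unop x)
  · intro x; exact D.dag_invol x
  · intro x y; exact S.so_add x y
  · intro c x; exact S.so_smul c x
  · intro x; exact S.so_bb x
  · intro b x; exact S.so_left b x
  · intro b x; exact S.so_right (op b) x
  · intro D; cases D; rfl
  · intro S; cases S; rfl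


end
end

section
/- Let H be an Hermitian metric on a B-bimodule E and ∇ a left connection on E for a ∗-differential calculus (Ω¹, d). Then ∇ is compatible with H (in the Beggs–Majid sense) if and only if the connection √−1·∇ for the first order differential calculus (Ω¹, √−1·d) is Hermitian (in the Mesland–Rennie sense) with respect to the sesquilinear form ⟨⟨e,f⟩⟩ = H(f̄)(e), where Ω¹ carries the †-structure †(ω) = ω∗. -/
open MulOpposite

noncomputable section

/-! ## Generic noncommutative differential geometry preliminaries

We encode a `B`-bimodule as a `ℂ`-module with a left `B`-action and a right `B`-action
(encoded as a left `Bᵐᵒᵖ`-action).  The balanced tensor product `M ⊗_B N` is encoded by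
a type `T` together with a "balanced pairing" `tp` whose image spans `T`. -/

/-- Data realizing `T` as the balanced tensor product `M ⊗_B N` over the
(possibly noncommutative) `ℂ`-algebra `B`: a `ℂ`-bilinear pairing which is left
`B`-linear in the first variable, right `B`-linear in the second variable,
`B`-balanced in the middle, and whose image spans `T`. -/
structure BalPair (B : Type) [Ring B] [Algebra ℂ B]
    (M N T : Type) [AddCommGroup M] [Module ℂ M] [Module B M] [Module Bᵐᵒᵖ M]
    [AddCommGroup N] [Module ℂ N] [Module B N] [Module Bᵐᵒᵖ N]
    [AddCommGroup T] [Module ℂ T] [Module B T] [Module Bᵐᵒᵖ T] : Type where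
  tp : M →ₗ[ℂ] N →ₗ[ℂ] T
  tp_left : ∀ (b : B) (m : M) (n : N), tp (b • m) n = b • tp m n
  tp_right : ∀ (b : B) (m : M) (n : N), tp m (op b • n) = op b • tp m n
  tp_mid : ∀ (b : B) (m : M) (n : N), tp (op b • m) n = tp m (b • n)
  tp_span : Submodule.span ℂ {t : T | ∃ m n, t = tp m n} = ⊤

/-- A first order differential calculus `(Ω¹, d)` over `B`:  `d : B → Ω¹` is a
derivation whose image generates `Ω¹` as a `B`-bimodule. -/
structure FODC (B : Type) [Ring B] [Algebra ℂ B]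
    (Ω : Type) [AddCommGroup Ω] [Module ℂ Ω] [Module B Ω] [Module Bᵐᵒᵖ Ω] : Type where
  d : B →ₗ[ℂ] Ω
  leibniz : ∀ a b : B, d (a * b) = a • d b + op b • d a
  generates : Submodule.span ℂ {x : Ω | ∃ a b : B, x = a • d b} = ⊤

section Connections

variable {B : Type} [Ring B] [Algebra ℂ B]
variable {Ω E TE T : Type}
  [AddCommGroup Ω] [Module ℂ Ω] [Module B Ω] [Module Bᵐᵒᵖ Ω]
  [AddCommGroup E] [Module ℂ E] [Module B E] [Module Bᵐᵒᵖ E]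
  [AddCommGroup TE] [Module ℂ TE] [Module B TE] [Module Bᵐᵒᵖ TE]
  [AddCommGroup T] [Module ℂ T] [Module B T] [Module Bᵐᵒᵖ T]

/-- `∇ : E → Ω¹ ⊗_B E` is a left connection: `∇(be) = b∇e + db ⊗ e`. -/
def IsConnection (P : BalPair B Ω E TE) (d : B →ₗ[ℂ] Ω) (cn : E →ₗ[ℂ] TE) : Prop :=
  ∀ (b : B) (e : E), cn (b • e) = b • cn e + P.tp (d b) e

/-- A `B`-bimodule map. -/
def IsBimoduleMap {M N : Type} [AddCommGroup M] [Module ℂ M] [Module B M] [Module Bᵐᵒᵖ M]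
    [AddCommGroup N] [Module ℂ N] [Module B N] [Module Bᵐᵒᵖ N] (σ : M →ₗ[ℂ] N) : Prop :=
  (∀ (b : B) (t : M), σ (b • t) = b • σ t) ∧ ∀ (b : B) (t : M), σ (op b • t) = op b • σ t

/-- The right Leibniz rule for a bimodule connection `(∇, σ)`:
`∇(eb) = (∇e)b + σ(e ⊗ db)`. -/
def IsRightConnection (Q : BalPair B E Ω TE)
    (d : B →ₗ[ℂ] Ω) (cn : E →ₗ[ℂ] TE) (σ : TE →ₗ[ℂ] TE) : Prop :=
  ∀ (b : B) (e : E), cn (op b • e) = op b • cn e + σ (Q.tp e (d b))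

end Connections

section Star

variable (B : Type) [Ring B] [Algebra ℂ B] [StarRing B]
variable (Ω : Type) [AddCommGroup Ω] [Module ℂ Ω] [Module B Ω] [Module Bᵐᵒᵖ Ω]

/-- A `∗`-structure on the bimodule `Ω` over the `∗`-algebra `B`:
an antilinear involution with `(bωc)∗ = c∗ω∗b∗`. -/
structure StarData : Type where
  st : Ω → Ω
  st_add : ∀ x y, st (x + y) = st x + st y
  st_smul : ∀ (c : ℂ) (x : Ω), st (c • x) = (starRingEnd ℂ c) • st x
  st_invol : ∀ x, st (st x) = x
  st_left : ∀ (b : B) (x : Ω), st (b • x) = op (star b) • st x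
  st_right : ∀ (b : B) (x : Ω), st (op b • x) = star b • st x

end Star

section StarNotions

variable {B : Type} [Ring B] [Algebra ℂ B] [StarRing B]
variable {Ω E TE T : Type}
  [AddCommGroup Ω] [Module ℂ Ω] [Module B Ω] [Module Bᵐᵒᵖ Ω]
  [AddCommGroup E] [Module ℂ E] [Module B E] [Module Bᵐᵒᵖ E]
  [AddCommGroup TE] [Module ℂ TE] [Module B TE] [Module Bᵐᵒᵖ TE]
  [AddCommGroup T] [Module ℂ T] [Module B T] [Module Bᵐᵒᵖ T]

/-- A metric `g = Σᵢ ωᵢ ⊗ ηᵢ` is real if `g = Σᵢ ηᵢ∗ ⊗ ωᵢ∗`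
(stated for every representation of `g` as a sum of simple tensors). -/
def IsRealMetric (P : BalPair B Ω Ω T) (S : StarData B Ω) (g : T) : Prop :=
  ∀ (n : ℕ) (α β : Fin n → Ω), g = ∑ i, P.tp (α i) (β i) →
    g = ∑ i, P.tp (S.st (β i)) (S.st (α i))

/-- The Beggs–Majid `∗`-preserving condition
`σ̄ ∘ Υ⁻¹ ∘ (⋆ ⊗ ⋆) ∘ ∇ = ∇̄ ∘ ⋆` for a bimodule connection `(∇, σ)` on `Ω¹`,
written out on representations `∇ω = Σᵢ αᵢ ⊗ βᵢ`:  `∇(ω∗) = Σᵢ σ(βᵢ∗ ⊗ αᵢ∗)`. -/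
def IsStarPreserving (P : BalPair B Ω Ω T) (S : StarData B Ω)
    (cn : Ω →ₗ[ℂ] T) (σ : T →ₗ[ℂ] T) : Prop :=
  ∀ (ω : Ω) (n : ℕ) (α β : Fin n → Ω), cn ω = ∑ i, P.tp (α i) (β i) →
    cn (S.st ω) = ∑ i, σ (P.tp (S.st (β i)) (S.st (α i)))

/-- Compatibility of a connection `∇` on `E` with an Hermitian metric (with associated
sesquilinear pairing `h`), in the sense of Beggs–Majid:
`d⟨·,·⟩ = (id ⊗ ⟨·,·⟩)(∇ ⊗ id) + (⟨·,·⟩ ⊗ id)(id ⊗ ∇̃)`, written out on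
representations `∇e = Σᵢ αᵢ ⊗ xᵢ`, `∇f = Σⱼ βⱼ ⊗ yⱼ`. -/
def IsHermCompatible (P : BalPair B Ω E TE) (d : B →ₗ[ℂ] Ω) (S : StarData B Ω)
    (h : E → E → B) (cn : E →ₗ[ℂ] TE) : Prop :=
  ∀ (e f : E) (n m : ℕ) (α : Fin n → Ω) (x : Fin n → E) (β : Fin m → Ω) (y : Fin m → E),
    cn e = ∑ i, P.tp (α i) (x i) → cn f = ∑ j, P.tp (β j) (y j) →
    d (h e f) = (∑ i, op (h (x i) f) • α i) + ∑ j, h e (y j) • S.st (β j)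

/-- A connection `∇'` on `E` for the calculus `(Ω¹, d')` with †-structure `dag` is
Hermitian with respect to the sesquilinear form `h` (Mesland–Rennie):
`d'⟨⟨e,f⟩⟩ = ⟨⟨∇'e, f⟩⟩ − ⟨⟨e, ∇'f⟩⟩`, written out on representations. -/
def IsHermitianConnection (P : BalPair B Ω E TE) (d' : B →ₗ[ℂ] Ω) (dag : Ω → Ω)
    (h : E → E → B) (cn' : E →ₗ[ℂ] TE) : Prop :=
  ∀ (e f : E) (n m : ℕ) (α : Fin n → Ω) (x : Fin n → E) (β : Fin m → Ω) (y : Fin m → E),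
    cn' e = ∑ i, P.tp (α i) (x i) → cn' f = ∑ j, P.tp (β j) (y j) →
    d' (h e f) = (∑ i, op (h (x i) f) • α i) - ∑ j, h e (y j) • dag (β j)

end StarNotions

section Junk

variable {B : Type} [Ring B] [Algebra ℂ B]
variable {Ω T : Type}
  [AddCommGroup Ω] [Module ℂ Ω] [Module B Ω] [Module Bᵐᵒᵖ Ω]
  [AddCommGroup T] [Module ℂ T] [Module B T] [Module Bᵐᵒᵖ T]

/-- The junk 2-tensors `JT²_d = { π̂(δω) : ω ∈ Ω¹_u ∩ Ker π̂ }` of a first order calculus,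
realized concretely inside `T = Ω¹ ⊗_B Ω¹`. -/
def junkTwoTensors (P : BalPair B Ω Ω T) (D : FODC B Ω) : Set T :=
  {t | ∃ (n : ℕ) (a b : Fin n → B), (∑ i, a i * b i = 0) ∧ (∑ i, a i • D.d (b i) = 0) ∧
    t = ∑ i, P.tp (D.d (a i)) (D.d (b i))}

/-- Torsion-freeness in the sense of Mesland–Rennie for a weak second order
differential structure `(Ω¹, d, ψ)`: `(1 − ψ)∇ = d_ψ`, where
`d_ψ(Σᵢ aᵢ dbᵢ) = (1 − ψ)(Σᵢ daᵢ ⊗ dbᵢ)` (well defined since `JT²_d ⊆ Ran ψ`). -/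
def IsTorsionFreeMR (P : BalPair B Ω Ω T) (d : B →ₗ[ℂ] Ω) (ψ : T →ₗ[ℂ] T)
    (cn : Ω →ₗ[ℂ] T) : Prop :=
  ∀ (n : ℕ) (a b : Fin n → B),
    cn (∑ i, a i • d (b i)) - ψ (cn (∑ i, a i • d (b i))) =
      (∑ i, P.tp (d (a i)) (d (b i))) - ψ (∑ i, P.tp (d (a i)) (d (b i)))

end Junk


/-- An Hermitian metric on a `B`-bimodule `E` over a `∗`-algebra `B`, encoded through the
associated pairing `h e f = ⟨e, f̄⟩ = H(f̄)(e)`.  The fields express exactly that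
`H : Ē → {left B-linear maps E → B}` is a `B`-bimodule isomorphism satisfying
`⟨y, x̄⟩∗ = ⟨x, ȳ⟩`. -/
structure HermMetric (B E : Type) [Ring B] [Algebra ℂ B] [StarRing B]
    [AddCommGroup E] [Module ℂ E] [Module B E] [Module Bᵐᵒᵖ E] : Type where
  h : E → E → B
  h_add_left : ∀ x y e, h (x + y) e = h x e + h y e
  h_add_right : ∀ e x y, h e (x + y) = h e x + h e y
  h_left : ∀ (b : B) (e f : E), h (b • e) f = b * h e f
  h_smul_left : ∀ (c : ℂ) (e f : E), h (c • e) f = c • h e f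
  h_smul_right : ∀ (c : ℂ) (e f : E), h e (c • f) = (starRingEnd ℂ c) • h e f
  h_bmod_left : ∀ (b : B) (e f : E), h (op b • e) f = h e (op (star b) • f)
  h_bmod_right : ∀ (b : B) (e f : E), h e (b • f) = h e f * star b
  h_symm : ∀ e f, star (h e f) = h f e
  h_inj : ∀ x y : E, (∀ e, h e x = h e y) → x = y
  h_surj : ∀ φ : E →ₗ[B] B, ∃ x : E, ∀ e, φ e = h e x

/-! ## STATEMENT 5 -/

/-- Let `H` be an Hermitian metric on a `B`-bimodule `E` and `∇` a left
connection on `E` for a first order `∗`-differential calculus `(Ω¹, d)`.  Then `∇` is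
compatible with `H` in the Beggs–Majid sense iff the connection `√−1·∇` for the first
order calculus `(Ω¹, √−1·d)` is Hermitian in the Mesland–Rennie sense with respect to the
sesquilinear form `⟨⟨e,f⟩⟩ = H(f̄)(e)`, where `Ω¹` carries the `†`-structure
`†(ω) = ω∗`. -/
theorem statement5
    {B : Type} [Ring B] [Algebra ℂ B] [StarRing B] [StarModule ℂ B]
    {Ω E TE : Type} [AddCommGroup Ω] [Module ℂ Ω] [Module B Ω] [Module Bᵐᵒᵖ Ω]
    [AddCommGroup E] [Module ℂ E] [Module B E] [Module Bᵐᵒᵖ E]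
    [AddCommGroup TE] [Module ℂ TE] [Module B TE] [Module Bᵐᵒᵖ TE]
    -- the first order ∗-differential calculus (Ω¹, d)
    (D : FODC B Ω) (S : StarData B Ω)
    (hdstar : ∀ b : B, S.st (D.d b) = D.d (star b))
    -- the balanced tensor product TE = Ω¹ ⊗_B E
    (P : BalPair B Ω E TE)
    -- an Hermitian metric on E
    (M : HermMetric B E)
    -- a left connection on E
    (cn : E →ₗ[ℂ] TE) (hconn : IsConnection P D.d cn) :
    IsHermCompatible P D.d S M.h cn ↔
      IsHermitianConnection P (Complex.I • D.d) S.st M.h (Complex.I • cn) := by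
  constructor
  · -- Beggs–Majid compatibility → Mesland–Rennie Hermitian
    intro hcomp e f n m α x β y he hf
    simp only [LinearMap.smul_apply] at he hf ⊢
    -- apply compatibility to `(I•e, f)` with `∇f`-representation `∑ β ⊗ (-I)•y`
    have key := hcomp (Complex.I • e) f n m α x β (fun j => (-Complex.I) • y j)
      (by rw [map_smul, he]) (by
        have : ∀ j, P.tp (β j) ((-Complex.I) • y j) = (-Complex.I) • P.tp (β j) (y j) :=
          fun j => map_smul _ _ _
        simp only [this, ← Finset.smul_sum, ← hf, smul_smul]
        simp)
    have hL : M.h (Complex.I • e) f = Complex.I • M.h e f := M.h_smul_left _ _ _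
    have hR : ∀ j, M.h (Complex.I • e) ((-Complex.I) • y j) = -(M.h e (y j)) := by
      intro j
      rw [M.h_smul_right, M.h_smul_left, map_neg, Complex.conj_I, neg_neg, smul_smul,
        Complex.I_mul_I, neg_one_smul]
    rw [hL, map_smul] at key
    rw [key, sub_eq_add_neg, ← Finset.sum_neg_distrib]
    congr 1
    refine Finset.sum_congr rfl fun j _ => ?_
    show M.h (Complex.I • e) (-Complex.I • y j) • S.st (β j) = _
    rw [hR j, neg_smul]
  · -- Mesland–Rennie Hermitian → Beggs–Majid compatibility
    intro hherm e f n m α x β y he hf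
    have key := hherm ((-Complex.I) • e) f n m α x β (fun j => Complex.I • y j)
      (by
        simp only [LinearMap.smul_apply, map_smul, smul_smul]
        simp [he]) (by
        have : ∀ j, P.tp (β j) (Complex.I • y j) = Complex.I • P.tp (β j) (y j) :=
          fun j => map_smul _ _ _
        simp only [LinearMap.smul_apply, this, ← Finset.smul_sum, ← hf])
    have hL : M.h ((-Complex.I) • e) f = (-Complex.I) • M.h e f := M.h_smul_left _ _ _
    have hR : ∀ j, M.h ((-Complex.I) • e) (Complex.I • y j) = -(M.h e (y j)) := by
      intro j
      rw [M.h_smul_right, M.h_smul_left, Complex.conj_I, smul_smul]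
      norm_num
    simp only [LinearMap.smul_apply, hL, map_smul, smul_smul, hR] at key
    rw [neg_mul, Complex.I_mul_I, neg_neg, one_smul] at key
    simp only [neg_smul, Finset.sum_neg_distrib, sub_neg_eq_add] at key
    exact key


end
end

section
/- Let (Ω•, ∧, d) be a differential calculus on an algebra B. Then the Connes differential calculus built from the first order calculus (Ω¹, d) with ambient algebra M = Ω• coincides with (Ω•, ∧, d) itself: every junk space J^k_d vanishes, Ω^k_C = Ω^k, ∧_C = ∧ and d_C = d. -/
noncomputable section

/-! ## STATEMENT 7: the Connes calculus of a differential calculus is the calculus itself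

A differential calculus `(Ω•, ∧, d)` on `B` is encoded as a graded `ℂ`-algebra `Om` with
grading `𝒜 : ℕ → Submodule ℂ Om` (so `B = 𝒜 0` and the product of `Om` is `∧`), together
with a degree-one differential `d` satisfying `d² = 0` and the graded Leibniz rule, and
generated by `𝒜 0` and `d(𝒜 0)`.

The Connes differential calculus of the first order calculus `(Ω¹, d) = (𝒜 1, d|_{𝒜 0})`
with ambient algebra `M = Ω•` has
`J^k_d = {Σ_j da₀ʲ⋯da_{k−1}ʲ : Σ_j a₀ʲ da₁ʲ⋯da_{k−1}ʲ = 0}` and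
`Ω^k_C = Ran(m_k)/J^k_d`, where `m_k` multiplies `k` one-forms in `M`.

**Statement 7** asserts: every junk space `J^k_d` vanishes, `Ran(m_k) = Ω^k`, and the
induced operations `∧_C` and `d_C` coincide with `∧` and `d` (the `∧_C = ∧` part is then
definitional since both are induced by the multiplication of `Ω•`; the `d_C = d` part is
the last conclusion below). -/
theorem statement7
    (Om : Type) [Ring Om] [Algebra ℂ Om]
    (𝒜 : ℕ → Submodule ℂ Om) [GradedRing 𝒜]
    (d : Om →ₗ[ℂ] Om)
    (hd_deg : ∀ (k : ℕ) (x : Om), x ∈ 𝒜 k → d x ∈ 𝒜 (k + 1))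
    (hd2 : ∀ x, d (d x) = 0)
    (hleibniz : ∀ (k : ℕ) (x y : Om), x ∈ 𝒜 k →
      d (x * y) = d x * y + ((-1 : ℂ) ^ k) • (x * d y))
    (hgen : ∀ k : ℕ, 𝒜 k = Submodule.span ℂ {x : Om | ∃ (b₀ : Om) (b : Fin k → Om),
      b₀ ∈ 𝒜 0 ∧ (∀ i, b i ∈ 𝒜 0) ∧ x = b₀ * (List.ofFn fun i => d (b i)).prod}) :
    -- (1) all the junk spaces J^k_d (k = m + 1 ≥ 1) vanish
    (∀ (m n : ℕ) (a : Fin n → Fin (m + 1) → Om), (∀ j i, a j i ∈ 𝒜 0) →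
      (∑ j, (a j 0) * (List.ofFn fun i : Fin m => d (a j i.succ)).prod) = 0 →
      (∑ j, (List.ofFn fun i : Fin (m + 1) => d (a j i)).prod) = 0) ∧
    -- (2) Ran(m_k) = Ω^k, so that Ω^k_C = Ran(m_k)/J^k_d = Ω^k
    (∀ k : ℕ, 1 ≤ k →
      Submodule.span ℂ {x : Om | ∃ ω : Fin k → Om, (∀ i, ω i ∈ 𝒜 1) ∧
        x = (List.ofFn ω).prod} = 𝒜 k) ∧
    -- (3) d_C = d on representatives b₀ db₁ ⋯ db_m
    (∀ (m : ℕ) (a : Fin (m + 1) → Om), (∀ i, a i ∈ 𝒜 0) →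
      d ((a 0) * (List.ofFn fun i : Fin m => d (a i.succ)).prod) =
        (List.ofFn fun i : Fin (m + 1) => d (a i)).prod) := by

  have h1 : d 1 = 0 := by
    have := hleibniz 0 1 1 (SetLike.one_mem_graded 𝒜)
    simpa using this
  have dprod : ∀ (m : ℕ) (b : Fin m → Om), (∀ i, b i ∈ 𝒜 0) →
      d ((List.ofFn fun i => d (b i)).prod) = 0 := by
    intro m
    induction m with
    | zero => intro b _; simpa using h1
    | succ m ih =>
      intro b hb
      rw [List.ofFn_succ, List.prod_cons]
      rw [hleibniz 1 _ _ (hd_deg 0 _ (hb 0))]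
      rw [show (fun i : Fin m => d (b i.succ)) = fun i => d ((b ∘ Fin.succ) i) from rfl] at *
      rw [ih (b ∘ Fin.succ) (fun i => hb i.succ), hd2]
      simp
  have key : ∀ (m : ℕ) (a : Fin (m + 1) → Om), (∀ i, a i ∈ 𝒜 0) →
      d ((a 0) * (List.ofFn fun i : Fin m => d (a i.succ)).prod) =
        (List.ofFn fun i : Fin (m + 1) => d (a i)).prod := by
    intro m a ha
    rw [hleibniz 0 _ _ (ha 0), dprod m (fun i => a i.succ) (fun i => ha i.succ)]
    rw [List.ofFn_succ, List.prod_cons]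
    simp
  refine ⟨?_, ?_, key⟩
  · intro m n a ha hsum
    have : ∀ j, (List.ofFn fun i : Fin (m + 1) => d (a j i)).prod
        = d ((a j 0) * (List.ofFn fun i : Fin m => d (a j i.succ)).prod) :=
      fun j => (key m (a j) (ha j)).symm
    rw [Finset.sum_congr rfl (fun j _ => this j), ← map_sum, hsum, map_zero]
  · intro k hk
    obtain ⟨m, rfl⟩ : ∃ m, k = m + 1 := ⟨k - 1, (Nat.succ_pred_eq_of_pos hk).symm⟩
    apply le_antisymm
    · rw [Submodule.span_le]
      rintro x ⟨ω, hω, rfl⟩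
      clear hk
      induction m with
      | zero => simpa using SetLike.mul_mem_graded (hω 0) (SetLike.one_mem_graded 𝒜)
      | succ m ih =>
        rw [List.ofFn_succ, List.prod_cons]
        have h2 : (List.ofFn fun i : Fin (m + 1) => ω i.succ).prod ∈ 𝒜 (m + 1) :=
          ih (fun i => ω i.succ) (fun i => hω i.succ)
        have := SetLike.mul_mem_graded (hω 0) h2
        rwa [add_comm] at this
    · rw [hgen (m + 1), Submodule.span_le]
      rintro x ⟨b₀, b, hb₀, hb, rfl⟩
      apply Submodule.subset_span
      refine ⟨Fin.cases (b₀ * d (b 0)) (fun i => d (b i.succ)), ?_, ?_⟩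
      · intro i
        refine Fin.cases ?_ (fun i => hd_deg 0 _ (hb i.succ)) i
        exact SetLike.mul_mem_graded hb₀ (hd_deg 0 _ (hb 0))
      · rw [List.ofFn_succ, List.prod_cons, List.ofFn_succ, List.prod_cons]
        simp [mul_assoc]


end
end

section
/- Let (Ω¹, d, ψ) be a weak second order differential structure such that Ω¹ is a sub-bimodule of a B-bimodule M which is an algebra. Then the following statements are equivalent: (i) Ran(ψ) ⊆ m₂⁻¹(J²_d); (ii) Ran(m₂ ∘ ψ) = J²_d; (iii) the map ∧_C ∘ ψ : Ω¹ ⊗_B Ω¹ → Ω²_C is identically zero, i.e. Ran(ψ) ⊆ Ker(∧_C). -/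
open MulOpposite

noncomputable section

/-! ## STATEMENT 8 -/

/-- Lemma on junk forms.  Let `(Ω¹, d, ψ)` be a weak second order
differential structure such that `Ω¹` is a sub-bimodule of a `B`-bimodule `M` which is an
algebra.  With `m₂ : Ω¹ ⊗_B Ω¹ → M` the multiplication map, `J²_d` the Connes junk
forms of degree two and `Ω²_C = Ran(m₂)/J²_d`, TFAE:
(i) `Ran(ψ) ⊆ m₂⁻¹(J²_d)`;
(ii) `Ran(m₂ ∘ ψ) = J²_d`;
(iii) `∧_C ∘ ψ : Ω¹ ⊗_B Ω¹ → Ω²_C` is identically zero. -/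
theorem statement8
    {B : Type} [Ring B] [Algebra ℂ B]
    {Ω T : Type} [AddCommGroup Ω] [Module ℂ Ω] [Module B Ω] [Module Bᵐᵒᵖ Ω]
    [AddCommGroup T] [Module ℂ T] [Module B T] [Module Bᵐᵒᵖ T]
    (P : BalPair B Ω Ω T) (D : FODC B Ω)
    -- the idempotent ψ of the weak second order differential structure
    (ψ : T →ₗ[ℂ] T) (hψbimod : IsBimoduleMap (B := B) ψ)
    (hψidem : ∀ t, ψ (ψ t) = ψ t)
    (hjunk : junkTwoTensors P D ⊆ Set.range ψ)
    -- the ambient algebra M, containing Ω¹ as a sub-bimodule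
    (M : Type) [Ring M] [Algebra ℂ M] [Module B M] [Module Bᵐᵒᵖ M]
    (j : Ω →ₗ[ℂ] M) (hj_inj : Function.Injective j)
    (hj_left : ∀ (b : B) (ω : Ω), j (b • ω) = b • j ω)
    (hj_right : ∀ (b : B) (ω : Ω), j (op b • ω) = op b • j ω)
    (hM_left : ∀ (b : B) (x y : M), (b • x) * y = b • (x * y))
    (hM_right : ∀ (b : B) (x y : M), x * (op b • y) = op b • (x * y))
    (hM_bal : ∀ (b : B) (x y : M), (op b • x) * y = x * (b • y))
    -- the multiplication map m₂ : Ω¹ ⊗_B Ω¹ → M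
    (m₂ : T →ₗ[ℂ] M) (hm₂ : ∀ ω η, m₂ (P.tp ω η) = j ω * j η)
    -- the degree two Connes junk forms J²_d
    (J2 : Set M)
    (hJ2 : J2 = {x : M | ∃ (n : ℕ) (a b : Fin n → B), (∑ i, a i * b i = 0) ∧
      (∑ i, a i • D.d (b i) = 0) ∧ x = ∑ i, j (D.d (a i)) * j (D.d (b i))}) :
    ((∀ t : T, m₂ (ψ t) ∈ J2) ↔ ({x : M | ∃ t, x = m₂ (ψ t)} = J2)) ∧
    ((∀ t : T, m₂ (ψ t) ∈ J2) ↔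
      (∀ t : T, (Submodule.Quotient.mk (m₂ (ψ t)) : M ⧸ Submodule.span ℂ J2) = 0)) := by
  -- `J2` contains `0`
  have h0 : (0 : M) ∈ J2 := by
    rw [hJ2]
    exact ⟨0, fun i => i.elim0, fun i => i.elim0, by simp, by simp, by simp⟩
  -- `J2` is closed under addition
  have hadd : ∀ x y, x ∈ J2 → y ∈ J2 → x + y ∈ J2 := by
    intro x y hx hy
    rw [hJ2] at hx hy ⊢
    obtain ⟨n, a, b, h1, h2, rfl⟩ := hx
    obtain ⟨m, a', b', h1', h2', rfl⟩ := hy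
    refine ⟨n + m, Fin.append a a', Fin.append b b', ?_, ?_, ?_⟩
    · simp [Fin.sum_univ_add, Fin.append_left, Fin.append_right, h1, h1']
    · simp [Fin.sum_univ_add, Fin.append_left, Fin.append_right, h2, h2']
    · simp [Fin.sum_univ_add, Fin.append_left, Fin.append_right]
  -- `J2` is closed under `ℂ`-scalar multiplication
  have hsmul : ∀ (c : ℂ) (x : M), x ∈ J2 → c • x ∈ J2 := by
    intro c x hx
    rw [hJ2] at hx ⊢
    obtain ⟨n, a, b, h1, h2, rfl⟩ := hx
    refine ⟨n, fun i => c • a i, b, ?_, ?_, ?_⟩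
    · simp only [smul_mul_assoc, ← Finset.smul_sum, h1, smul_zero]
    · have key : ∀ i : Fin n, (c • a i) • D.d (b i) =
          (c • (1 : B)) • (a i • D.d (b i)) := by
        intro i
        rw [← mul_smul, smul_mul_assoc, one_mul]
      simp only [key, ← Finset.smul_sum, h2, smul_zero]
    · simp only [map_smul, smul_mul_assoc, ← Finset.smul_sum]
  -- hence the span of `J2` is `J2` itself
  have hspanJ : ∀ x : M, x ∈ Submodule.span ℂ J2 → x ∈ J2 := by
    intro x hx
    let J' : Submodule ℂ M :=
      { carrier := J2
        add_mem' := fun hx hy => hadd _ _ hx hy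
        zero_mem' := h0
        smul_mem' := fun c x hx => hsmul c x hx }
    have hle : Submodule.span ℂ J2 ≤ J' := Submodule.span_le.mpr (fun y hy => hy)
    exact hle hx
  -- every junk form is in the range of `m₂ ∘ ψ`
  have key1 : ∀ x ∈ J2, ∃ t, x = m₂ (ψ t) := by
    intro x hx
    rw [hJ2] at hx
    obtain ⟨n, a, b, h1, h2, rfl⟩ := hx
    have hjt : (∑ i, P.tp (D.d (a i)) (D.d (b i))) ∈ junkTwoTensors P D :=
      ⟨n, a, b, h1, h2, rfl⟩
    obtain ⟨s, hs⟩ := hjunk hjt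
    refine ⟨s, ?_⟩
    rw [hs, map_sum]
    simp [hm₂]
  constructor
  · constructor
    · intro h
      ext x
      constructor
      · rintro ⟨t, rfl⟩
        exact h t
      · intro hx
        obtain ⟨t, ht⟩ := key1 x hx
        exact ⟨t, ht⟩
    · intro h t
      rw [← h]
      exact ⟨t, rfl⟩
  · constructor
    · intro h t
      rw [Submodule.Quotient.mk_eq_zero]
      exact Submodule.subset_span (h t)
    · intro h t
      have := h t
      rw [Submodule.Quotient.mk_eq_zero] at this
      exact hspanJ _ this


end
end

section
/- Let (Ω¹, d, ψ) be a weak second order differential structure with Ω¹ a sub-bimodule of a B-bimodule M which is an algebra, and let ∇ be a connection on Ω¹. Then: (i) if Ker(∧_C) ⊆ Ran(ψ) and ∧_C ∘ ∇ = d_C, then (1 − ψ)∇ = d_ψ; (ii) if Ran(ψ) ⊆ Ker(∧_C) (equivalently Ran(m₂ ∘ ψ) = J²_d) and (1 − ψ)∇ = d_ψ, then ∧_C ∘ ∇ = d_C. -/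
open MulOpposite

noncomputable section

/-! ## STATEMENT 9 -/

/-- Let `(Ω¹, d, ψ)` be a weak second order differential structure with
`Ω¹` a sub-bimodule of a `B`-bimodule `M` which is an algebra and let `∇` be a connection
on `Ω¹`.  With `(Ω•_C, ∧_C, d_C)` the Connes calculus, `J²_d` the degree-two junk and
`d_ψ` the Mesland–Rennie differential:
(i) if `Ker(∧_C) ⊆ Ran(ψ)` and `∧_C ∘ ∇ = d_C`, then `(1 − ψ)∇ = d_ψ`;
(ii) if `Ran(ψ) ⊆ Ker(∧_C)` (equivalently `Ran(m₂ ∘ ψ) = J²_d`) and `(1 − ψ)∇ = d_ψ`,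
then `∧_C ∘ ∇ = d_C`. -/
theorem statement9
    {B : Type} [Ring B] [Algebra ℂ B]
    {Ω T : Type} [AddCommGroup Ω] [Module ℂ Ω] [Module B Ω] [Module Bᵐᵒᵖ Ω]
    [AddCommGroup T] [Module ℂ T] [Module B T] [Module Bᵐᵒᵖ T]
    (P : BalPair B Ω Ω T) (D : FODC B Ω)
    -- the idempotent ψ of the weak second order differential structure
    (ψ : T →ₗ[ℂ] T) (hψbimod : IsBimoduleMap (B := B) ψ)
    (hψidem : ∀ t, ψ (ψ t) = ψ t)
    (hjunk : junkTwoTensors P D ⊆ Set.range ψ)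
    -- the ambient algebra M, containing Ω¹ as a sub-bimodule
    (M : Type) [Ring M] [Algebra ℂ M] [Module B M] [Module Bᵐᵒᵖ M]
    (j : Ω →ₗ[ℂ] M) (hj_inj : Function.Injective j)
    (hj_left : ∀ (b : B) (ω : Ω), j (b • ω) = b • j ω)
    (hj_right : ∀ (b : B) (ω : Ω), j (op b • ω) = op b • j ω)
    (hM_left : ∀ (b : B) (x y : M), (b • x) * y = b • (x * y))
    (hM_right : ∀ (b : B) (x y : M), x * (op b • y) = op b • (x * y))
    (hM_bal : ∀ (b : B) (x y : M), (op b • x) * y = x * (b • y))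
    -- the multiplication map m₂ : Ω¹ ⊗_B Ω¹ → M
    (m₂ : T →ₗ[ℂ] M) (hm₂ : ∀ ω η, m₂ (P.tp ω η) = j ω * j η)
    -- the degree two Connes junk forms J²_d
    (J2 : Set M)
    (hJ2 : J2 = {x : M | ∃ (n : ℕ) (a b : Fin n → B), (∑ i, a i * b i = 0) ∧
      (∑ i, a i • D.d (b i) = 0) ∧ x = ∑ i, j (D.d (a i)) * j (D.d (b i))})
    -- a connection ∇ on Ω¹
    (cn : Ω →ₗ[ℂ] T) (hconn : IsConnection P D.d cn) :
    -- (i)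
    ((∀ t : T, (Submodule.Quotient.mk (m₂ t) : M ⧸ Submodule.span ℂ J2) = 0 →
        t ∈ Set.range ψ) →
      (∀ (n : ℕ) (a b : Fin n → B),
        (Submodule.Quotient.mk (m₂ (cn (∑ i, a i • D.d (b i)))) :
            M ⧸ Submodule.span ℂ J2) =
          Submodule.Quotient.mk (∑ i, j (D.d (a i)) * j (D.d (b i)))) →
      IsTorsionFreeMR P D.d ψ cn) ∧
    -- (ii)
    ((∀ t : T, m₂ (ψ t) ∈ J2) → IsTorsionFreeMR P D.d ψ cn →
      (∀ (n : ℕ) (a b : Fin n → B),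
        (Submodule.Quotient.mk (m₂ (cn (∑ i, a i • D.d (b i)))) :
            M ⧸ Submodule.span ℂ J2) =
          Submodule.Quotient.mk (∑ i, j (D.d (a i)) * j (D.d (b i))))) := by
  constructor
  · intro hker hC n a b
    set x := cn (∑ i, a i • D.d (b i)) with hx
    set y := ∑ i, P.tp (D.d (a i)) (D.d (b i)) with hy
    have hm2y : m₂ y = ∑ i, j (D.d (a i)) * j (D.d (b i)) := by
      simp [hy, map_sum, hm₂]
    have hmk : (Submodule.Quotient.mk (m₂ (x - y)) : M ⧸ Submodule.span ℂ J2) = 0 := by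
      rw [map_sub, Submodule.Quotient.mk_sub, hm2y, sub_eq_zero]
      exact hC n a b
    obtain ⟨s, hs⟩ := hker _ hmk
    have : x - y - ψ (x - y) = 0 := by
      rw [← hs, hψidem, sub_self]
    have h2 : x - ψ x - (y - ψ y) = 0 := by
      have := this
      rw [map_sub] at this
      abel_nf
      abel_nf at this
      linear_combination (norm := abel) this
    have := sub_eq_zero.mp h2
    exact this
  · intro hran htf n a b
    set x := cn (∑ i, a i • D.d (b i)) with hx
    set y := ∑ i, P.tp (D.d (a i)) (D.d (b i)) with hy
    have hm2y : m₂ y = ∑ i, j (D.d (a i)) * j (D.d (b i)) := by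
      simp [hy, map_sum, hm₂]
    rw [← hm2y, ← sub_eq_zero, ← Submodule.Quotient.mk_sub, ← map_sub]
    have hxy : x - y = ψ x - ψ y := by
      have := htf n a b
      rw [← hx, ← hy] at this
      linear_combination (norm := abel) this
    rw [hxy, map_sub, Submodule.Quotient.mk_sub]
    have h1 : (Submodule.Quotient.mk (m₂ (ψ x)) : M ⧸ Submodule.span ℂ J2) = 0 := by
      rw [Submodule.Quotient.mk_eq_zero]
      exact Submodule.subset_span (hran x)
    have h2 : (Submodule.Quotient.mk (m₂ (ψ y)) : M ⧸ Submodule.span ℂ J2) = 0 := by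
      rw [Submodule.Quotient.mk_eq_zero]
      exact Submodule.subset_span (hran y)
    rw [h1, h2, sub_zero]


end
end

section
/- Let (Ω•, ∧, d) be a differential calculus on B such that Ω¹ is finitely generated projective as a left B-module. Then the assignment s ↦ ψ_s := 1 − s ∘ ∧ defines a bijective correspondence between quasi-tame structures on (Ω•, ∧, d) (i.e. B-bimodule maps s : Ω² → Ω¹ ⊗_B Ω¹ with ∧ ∘ s = id) and weak second order differential structures (Ω¹, d, ψ) satisfying Ker(∧) = Ran(ψ); the inverse sends ψ to s_ψ, the inverse of the isomorphism ∧ restricted to Ran(1 − ψ). -/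
open MulOpposite

noncomputable section

/-! ## STATEMENT 10 -/

/-- Let `(Ω•, ∧, d)` be a differential calculus with `Ω¹` finitely
generated projective as a left `B`-module.  Then `s ↦ ψ_s := 1 − s∘∧` is a bijective
correspondence between quasi-tame structures (bimodule maps `s : Ω² → Ω¹ ⊗_B Ω¹` with
`∧∘s = id`) and weak second order differential structures `(Ω¹, d, ψ)` with
`Ker(∧) = Ran(ψ)`; the inverse sends `ψ` to `s_ψ`, the inverse of `∧` restricted to
`Ran(1 − ψ)` (so `s_ψ ∘ ∧ = 1 − ψ`). -/
theorem statement10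
    {B : Type} [Ring B] [Algebra ℂ B]
    {Ω T Ω2 : Type} [AddCommGroup Ω] [Module ℂ Ω] [Module B Ω] [Module Bᵐᵒᵖ Ω]
    [AddCommGroup T] [Module ℂ T] [Module B T] [Module Bᵐᵒᵖ T]
    [AddCommGroup Ω2] [Module ℂ Ω2] [Module B Ω2] [Module Bᵐᵒᵖ Ω2]
    [Module.Finite B Ω] [Module.Projective B Ω]
    (P : BalPair B Ω Ω T) (D : FODC B Ω)
    -- the wedge map Ω¹ ⊗_B Ω¹ → Ω² and the differential d : Ω¹ → Ω² of the calculus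
    (wedge : T →ₗ[ℂ] Ω2) (hwedge : IsBimoduleMap (B := B) wedge)
    (hwedge_surj : Function.Surjective wedge)
    (d₁ : Ω →ₗ[ℂ] Ω2)
    (hd₁ : ∀ a b : B, d₁ (a • D.d b) = wedge (P.tp (D.d a) (D.d b))) :
    -- (a) for every quasi-tame structure s, ψ_s = 1 − s∘∧ is a weak second order
    -- differential structure with Ker(∧) = Ran(ψ_s)
    (∀ s : Ω2 →ₗ[ℂ] T, IsBimoduleMap (B := B) s → (∀ x, wedge (s x) = x) →
      (IsBimoduleMap (B := B) ((LinearMap.id : T →ₗ[ℂ] T) - s ∘ₗ wedge) ∧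
       (∀ t, ((LinearMap.id : T →ₗ[ℂ] T) - s ∘ₗ wedge) (((LinearMap.id : T →ₗ[ℂ] T) - s ∘ₗ wedge) t) =
          ((LinearMap.id : T →ₗ[ℂ] T) - s ∘ₗ wedge) t) ∧
       junkTwoTensors P D ⊆ Set.range ((LinearMap.id : T →ₗ[ℂ] T) - s ∘ₗ wedge) ∧
       LinearMap.ker wedge = LinearMap.range ((LinearMap.id : T →ₗ[ℂ] T) - s ∘ₗ wedge))) ∧
    -- (b) conversely, every such ψ arises from a unique quasi-tame structure s
    (∀ ψ : T →ₗ[ℂ] T, IsBimoduleMap (B := B) ψ → (∀ t, ψ (ψ t) = ψ t) →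
      junkTwoTensors P D ⊆ Set.range ψ → LinearMap.ker wedge = LinearMap.range ψ →
      ∃! s : Ω2 →ₗ[ℂ] T, (IsBimoduleMap (B := B) s ∧ (∀ x, wedge (s x) = x)) ∧
        (LinearMap.id : T →ₗ[ℂ] T) - s ∘ₗ wedge = ψ) ∧
    -- (c) the inverse correspondence is ψ ↦ s_ψ, i.e. s∘∧ = 1 − ψ
    (∀ (ψ : T →ₗ[ℂ] T) (s : Ω2 →ₗ[ℂ] T),
      (LinearMap.id : T →ₗ[ℂ] T) - s ∘ₗ wedge = ψ → ∀ t, s (wedge t) = t - ψ t) := by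
  obtain ⟨hwl, hwr⟩ := hwedge
  refine ⟨?_, ?_, ?_⟩
  · -- part (a)
    intro s hs hws
    have hψap : ∀ t : T,
        ((LinearMap.id : T →ₗ[ℂ] T) - s ∘ₗ wedge) t = t - s (wedge t) := fun t => rfl
    refine ⟨⟨?_, ?_⟩, ?_, ?_, ?_⟩
    · intro b t
      simp only [hψap, hwl, hs.1, smul_sub]
    · intro b t
      simp only [hψap, hwr, hs.2, smul_sub]
    · intro t
      simp only [hψap, map_sub, hws, sub_sub_cancel, sub_self, map_zero, sub_zero]
    · rintro t ⟨n, a, b, hab, hsum, ht⟩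
      have hwt : wedge t = 0 := by
        rw [ht, map_sum]
        have : ∀ i, wedge (P.tp (D.d (a i)) (D.d (b i))) = d₁ (a i • D.d (b i)) :=
          fun i => (hd₁ (a i) (b i)).symm
        rw [Finset.sum_congr rfl fun i _ => this i, ← map_sum, hsum, map_zero]
      exact ⟨t, by simp [hψap, hwt]⟩
    · apply le_antisymm
      · intro t ht
        have hwt : wedge t = 0 := ht
        exact ⟨t, by simp [hψap, hwt]⟩
      · rintro t ⟨u, rfl⟩
        have : wedge (u - s (wedge u)) = 0 := by
          simp [map_sub, hws]
        simpa [hψap] using this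
  · -- part (b)
    intro ψ hψ hidem hjunk hker
    have hkerle : LinearMap.ker wedge ≤
        LinearMap.ker ((LinearMap.id : T →ₗ[ℂ] T) - ψ) := by
      intro t ht
      rw [hker] at ht
      obtain ⟨u, rfl⟩ := ht
      simp [LinearMap.mem_ker, hidem u]
    set e := LinearMap.quotKerEquivOfSurjective wedge hwedge_surj with he
    set s : Ω2 →ₗ[ℂ] T :=
      (Submodule.liftQ (LinearMap.ker wedge)
        ((LinearMap.id : T →ₗ[ℂ] T) - ψ) hkerle) ∘ₗ (e.symm : Ω2 →ₗ[ℂ] T ⧸ LinearMap.ker wedge)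
      with hsdef
    have hemk : ∀ t : T, e (Submodule.Quotient.mk t) = wedge t := fun t => rfl
    have hsw : ∀ t : T, s (wedge t) = t - ψ t := by
      intro t
      have h1 : e.symm (wedge t) = Submodule.Quotient.mk t := by
        rw [LinearEquiv.symm_apply_eq, hemk]
      simp only [hsdef, LinearMap.coe_comp, Function.comp_apply, LinearEquiv.coe_coe, h1]
      rfl
    have hψrange : ∀ t : T, wedge (ψ t) = 0 := by
      intro t
      have : ψ t ∈ LinearMap.ker wedge := by rw [hker]; exact ⟨t, rfl⟩
      exact this
    have hwsx : ∀ x : Ω2, wedge (s x) = x := by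
      intro x
      obtain ⟨t, rfl⟩ := hwedge_surj x
      rw [hsw, map_sub, hψrange, sub_zero]
    have hsbim : IsBimoduleMap (B := B) s := by
      constructor
      · intro b x
        obtain ⟨t, rfl⟩ := hwedge_surj x
        rw [← hwl, hsw, hsw, hψ.1, smul_sub]
      · intro b x
        obtain ⟨t, rfl⟩ := hwedge_surj x
        rw [← hwr, hsw, hsw, hψ.2, smul_sub]
    refine ⟨s, ⟨⟨hsbim, hwsx⟩, ?_⟩, ?_⟩
    · ext t
      simp [hsw t]
    · rintro s' ⟨-, hs'⟩
      apply LinearMap.ext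
      intro x
      obtain ⟨t, rfl⟩ := hwedge_surj x
      have h1 : t - s' (wedge t) = ψ t := by
        have := congrArg (fun f : T →ₗ[ℂ] T => f t) hs'
        simpa using this
      rw [hsw, ← h1]
      abel
  · intro ψ s h t
    have := congrArg (fun f : T →ₗ[ℂ] T => f t) h
    simp only [LinearMap.sub_apply, LinearMap.id_apply, LinearMap.coe_comp,
      Function.comp_apply] at this
    rw [← this]
    abel


end
end

section
/- Let (Ω•, ∧, d, s) be a quasi-tame differential calculus on B and ∇ a connection on Ω¹. Then ∇ is torsionless in the sense of Beggs–Majid (∧ ∘ ∇ = d) if and only if ∇ is torsionless in the sense of Mesland–Rennie for the weak second order differential structure (Ω¹, d, ψ_s) with ψ_s = 1 − s ∘ ∧, i.e. (1 − ψ_s)∇ = d_{ψ_s}. -/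
open MulOpposite

noncomputable section

/-! ## STATEMENT 11 -/

/-- Let `(Ω•, ∧, d, s)` be a quasi-tame differential calculus and `∇`
a connection on `Ω¹`.  Then `∇` is torsionless in the sense of Beggs–Majid
(`∧ ∘ ∇ = d`) iff `∇` is torsionless in the sense of Mesland–Rennie for the weak second
order differential structure `(Ω¹, d, ψ_s)`, `ψ_s = 1 − s∘∧`, i.e.
`(1 − ψ_s)∇ = d_{ψ_s}`. -/
theorem statement11
    {B : Type} [Ring B] [Algebra ℂ B]
    {Ω T Ω2 : Type} [AddCommGroup Ω] [Module ℂ Ω] [Module B Ω] [Module Bᵐᵒᵖ Ω]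
    [AddCommGroup T] [Module ℂ T] [Module B T] [Module Bᵐᵒᵖ T]
    [AddCommGroup Ω2] [Module ℂ Ω2] [Module B Ω2] [Module Bᵐᵒᵖ Ω2]
    [Module.Finite B Ω] [Module.Projective B Ω]
    (P : BalPair B Ω Ω T) (D : FODC B Ω)
    -- the wedge map Ω¹ ⊗_B Ω¹ → Ω² and the differential d : Ω¹ → Ω² of the calculus
    (wedge : T →ₗ[ℂ] Ω2) (hwedge : IsBimoduleMap (B := B) wedge)
    (hwedge_surj : Function.Surjective wedge)
    (d₁ : Ω →ₗ[ℂ] Ω2)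
    (hd₁ : ∀ a b : B, d₁ (a • D.d b) = wedge (P.tp (D.d a) (D.d b)))
    -- the quasi-tame splitting s of the wedge map
    (s : Ω2 →ₗ[ℂ] T) (hs_bimod : IsBimoduleMap (B := B) s)
    (hs_split : ∀ x, wedge (s x) = x)
    -- ψ_s = 1 − s∘∧
    (ψs : T →ₗ[ℂ] T) (hψs : ψs = (LinearMap.id : T →ₗ[ℂ] T) - s ∘ₗ wedge)
    -- a connection ∇ on Ω¹
    (cn : Ω →ₗ[ℂ] T) (hconn : IsConnection P D.d cn) :
    (∀ ω : Ω, wedge (cn ω) = d₁ ω) ↔ IsTorsionFreeMR P D.d ψs cn := by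
  have key : ∀ x : T, x - ψs x = s (wedge x) := by
    intro x; simp [hψs]
  constructor
  · intro h n a b
    rw [key, key, h]
    congr 1
    rw [map_sum, map_sum]
    congr 1
    ext i
    exact hd₁ (a i) (b i)
  · intro h ω
    have hgen : ∀ x ∈ Submodule.span ℂ {x : Ω | ∃ a b : B, x = a • D.d b},
        wedge (cn x) = d₁ x := by
      intro x hx
      induction hx using Submodule.span_induction with
      | mem x hx =>
        obtain ⟨a, b, rfl⟩ := hx
        have h1 := h 1 (fun _ => a) (fun _ => b)
        simp only [key, Fin.sum_univ_one] at h1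
        have := congrArg wedge h1
        simpa [hs_split, hd₁] using this
      | zero => simp
      | add x y _ _ hx hy => simp [map_add, hx, hy]
      | smul c x _ hx => simp [map_smul, hx]
    exact hgen ω (by rw [D.generates]; trivial)


end
end
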